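/- arXiv:2003.09028 — 6 statements merged into one kernel-verified Lean document; each statement's English description precedes it below -/
import Mathlib

section
/- Let p be an odd prime and d a positive integer not divisible by p. Define τ_{i,j} = i·d - (1 - 1/p)·d·j as a rational number, and for 0 ≤ j ≤ p-1 define L_j(d) = Σ_{i=j}^{p-1} ( ⌊i·d/p⌋ - ⌊τ_{i,j}/p⌋ ). Then for (p+1)/2 ≤ j ≤ p-2, one has L_j(d) ≥ L_{j+1}(d). -/
/-- `L_j(d)` from Booher–Cais, for a `ℤ/pℤ`-cover with a single ramification invariant `d`. -/
def Lj (p d j : ℕ) : ℤ :=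
  ∑ i ∈ Finset.Icc j (p - 1),
    (⌊((i : ℚ) * d) / p⌋ - ⌊((i : ℚ) * d) / p - (1 - 1 / (p : ℚ)) * ((j : ℚ) * d) / p⌋)

private lemma sum_shift' (f : ℕ → ℤ) (a b : ℕ) :
    ∑ i ∈ Finset.Icc (a + 1) (b + 1), f i = ∑ i ∈ Finset.Icc a b, f (i + 1) := by
  rw [← Finset.map_add_right_Icc, Finset.sum_map]
  simp [addRightEmbedding]

private lemma sum_shift (f : ℕ → ℤ) (a b : ℕ) (h : a ≤ b + 1) :
    ∑ i ∈ Finset.Icc a (b + 1), f i = f a + ∑ i ∈ Finset.Icc a b, f (i + 1) := by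
  rw [Finset.Icc_eq_cons_Ioc h, Finset.sum_cons, ← Finset.Icc_add_one_left_eq_Ioc, sum_shift']

theorem Lj_decreasing (p d j : ℕ) (hp : p.Prime) (hodd : Odd p) (hd : 0 < d)
    (hpd : ¬ p ∣ d) (hj1 : (p + 1) / 2 ≤ j) (hj2 : j ≤ p - 2) :
    Lj p d (j + 1) ≤ Lj p d j := by
  have hp2 : 2 ≤ p := hp.two_le
  have hpm : p % 2 = 1 := Nat.odd_iff.mp hodd
  have h2j : p + 1 ≤ 2 * j := by omega
  have hpe : p - 1 = (p - 2) + 1 := by omega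
  have hq0 : (0:ℚ) < p := by exact_mod_cast hp.pos
  have hqne : (p:ℚ) ≠ 0 := ne_of_gt hq0
  have hdq : (1:ℚ) ≤ d := by exact_mod_cast hd
  have hjq : (p:ℚ) + 1 ≤ 2 * j := by exact_mod_cast h2j
  have hjq2 : (j:ℚ) + 2 ≤ p := by exact_mod_cast (by omega : j + 2 ≤ p)
  unfold Lj
  rw [hpe, Finset.sum_sub_distrib, Finset.sum_sub_distrib,
    sum_shift (fun i => (⌊((i:ℚ)*d)/p⌋ : ℤ)) j (p-2) (by omega),
    sum_shift' (fun i => (⌊((i:ℚ)*d)/p⌋ : ℤ)) j (p-2),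
    sum_shift' (fun i => (⌊((i:ℚ)*d)/p - (1 - 1/(p:ℚ)) * ((((j:ℕ)+1:ℕ):ℚ) * d) / p⌋ : ℤ)) j (p-2),
    Finset.sum_Icc_succ_top (by omega : j ≤ (p-2)+1)]
  have hsum : ∑ i ∈ Finset.Icc j (p-2), (⌊((i:ℚ)*d)/p - (1 - 1/(p:ℚ)) * ((j:ℚ)*d) / p⌋ : ℤ)
      ≤ ∑ i ∈ Finset.Icc j (p-2),
        (⌊(((i+1:ℕ):ℚ)*d)/p - (1 - 1/(p:ℚ)) * ((((j:ℕ)+1:ℕ):ℚ)*d) / p⌋ : ℤ) := by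
    refine Finset.sum_le_sum fun i _ => Int.floor_le_floor ?_
    push_cast
    have key : ((i:ℚ)+1)*d/p - (1 - 1/(p:ℚ)) * (((j:ℚ)+1)*d) / p
        - ((i:ℚ)*d/p - (1 - 1/(p:ℚ)) * ((j:ℚ)*d) / p) = d/(p:ℚ)^2 := by
      field_simp
      ring
    have h0 : (0:ℚ) ≤ d/(p:ℚ)^2 := by positivity
    linarith
  have hterm : (⌊(((p-2+1:ℕ)):ℚ)*d/p - (1 - 1/(p:ℚ)) * ((j:ℚ)*d) / p⌋ : ℤ)
      ≤ ⌊((j:ℚ)*d)/p⌋ := by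
    refine Int.floor_le_floor ?_
    have hc : (((p-2+1:ℕ)):ℚ) = (p:ℚ) - 1 := by
      rw [show p - 2 + 1 = p - 1 from by omega, Nat.cast_sub (by omega)]
      norm_num
    rw [hc]
    have key : (j:ℚ)*d/p - (((p:ℚ)-1)*d/p - (1 - 1/(p:ℚ)) * ((j:ℚ)*d) / p)
        = d*(2*j*p - j - (p:ℚ)^2 + p)/(p:ℚ)^2 := by
      field_simp
      ring
    have hnum : (0:ℚ) ≤ 2*(j:ℚ)*p - j - (p:ℚ)^2 + p := by nlinarith
    have h0 : (0:ℚ) ≤ d*(2*(j:ℚ)*p - j - (p:ℚ)^2 + p)/(p:ℚ)^2 := by positivity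
    linarith
  linarith
end

section
/- Let p be a prime and d a positive integer not divisible by p. For 0 ≤ j ≤ p-1 define L_j(d) = Σ_{i=j}^{p-1} ( ⌊i·d/p⌋ - ⌊i·d/p - (1 - 1/p)·j·d/p⌋ ). Then L_j(d) = L_{p-j}(d) for all 1 ≤ j ≤ p-1. -/
lemma emod_eq_of {p x y : ℤ} (hp : 0 < p) (h0 : 0 ≤ y) (h1 : y < p) (h : p ∣ x - y) :
    x % p = y := by
  obtain ⟨c, hc⟩ := h
  have hx : x = y + p * c := by linarith
  rw [hx, Int.add_mul_emod_self_left, Int.emod_eq_of_lt h0 h1]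

lemma floorA (p d i : ℕ) : ⌊((i : ℚ) * d) / p⌋ = ((i : ℤ) * d) / p := by
  have h : ((i : ℚ) * d) / p = ((((i * d : ℕ) : ℤ) : ℚ)) / ((p : ℕ) : ℚ) := by push_cast; ring
  rw [h, Rat.floor_intCast_div_natCast]
  push_cast; ring_nf

lemma floorB (p d i j : ℕ) (hp : 0 < p) {q r : ℤ} (hqr : (j : ℤ) * d = p * q + r)
    (hr0 : 0 ≤ r) (hr1 : r < p) :
    ⌊((i : ℚ) * d) / p - (1 - 1 / (p : ℚ)) * ((j : ℚ) * d) / p⌋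
      = ((i : ℤ) * d - (j : ℤ) * d + q) / p := by
  have hp0 : ((p : ℕ) : ℚ) ≠ 0 := by exact_mod_cast hp.ne'
  have harg : ((i : ℚ) * d) / p - (1 - 1 / (p : ℚ)) * ((j : ℚ) * d) / p
      = (((i : ℤ) * d * p - (j : ℤ) * d * ((p : ℤ) - 1) : ℤ) : ℚ) / ((p * p : ℕ) : ℚ) := by
    field_simp
    push_cast
    ring
  rw [harg, Rat.floor_intCast_div_natCast]
  set A : ℤ := (i : ℤ) * d - (j : ℤ) * d + q with hA
  have hpz : (0 : ℤ) < (p : ℤ) := by exact_mod_cast hp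
  have hS0 : 0 ≤ A % p := Int.emod_nonneg _ hpz.ne'
  have hS1 : A % p < p := Int.emod_lt_of_pos _ hpz
  have hAeq : A = p * (A / p) + A % p := (Int.mul_ediv_add_emod A p).symm
  have hkey : (i : ℤ) * d * p - (j : ℤ) * d * ((p : ℤ) - 1)
      = (A % p * p + r) + ((p : ℤ) * p) * (A / p) := by
    have : (i : ℤ) * d * p - (j : ℤ) * d * ((p : ℤ) - 1) = A * p + r := by
      rw [hA]; linear_combination hqr
    rw [this]
    nlinarith [hAeq]
  have hb1 : 0 ≤ A % p * p + r := by positivity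
  have hb2 : A % p * p + r < (p : ℤ) * p := by nlinarith
  have := ((Int.ediv_emod_unique (b := (p : ℤ) * p) (a := (i : ℤ) * d * p - (j : ℤ) * d * ((p : ℤ) - 1))
      (q := A / p) (r := A % p * p + r) (by positivity)).mpr ⟨by linarith [hkey], hb1, hb2⟩).1
  rw [show (((p * p : ℕ) : ℤ)) = (p : ℤ) * p by push_cast; ring]
  exact this


lemma intPrime {p : ℕ} (hp : p.Prime) : Prime (p : ℤ) := Nat.prime_iff_prime_int.mp hp

lemma dvd_sub_of_emod_eq' {a b p : ℤ} (h : a % p = b % p) : p ∣ a - b := by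
  have h2 : (a - b) % p = 0 := Int.emod_eq_emod_iff_emod_sub_eq_zero.mp h
  exact Int.dvd_of_emod_eq_zero h2

lemma period_sum (p d : ℕ) (hp : p.Prime) (hpd : ¬ p ∣ d) (q : ℤ) :
    2 * ∑ n ∈ Finset.range p, (((n : ℤ) * d + q) % p) = (p : ℤ) * ((p : ℤ) - 1) := by
  have hp0 : (0 : ℤ) < (p : ℤ) := by exact_mod_cast hp.pos
  set φ : ℕ → ℕ := fun n => (((n : ℤ) * d + q) % p).toNat with hφ
  have hφcast : ∀ n, ((φ n : ℕ) : ℤ) = ((n : ℤ) * d + q) % p := fun n =>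
    Int.toNat_of_nonneg (Int.emod_nonneg _ hp0.ne')
  have hinj : Set.InjOn φ (Finset.range p) := by
    intro a ha b hb hab
    simp only [Finset.coe_range, Set.mem_Iio] at ha hb
    have h1 : ((a : ℤ) * d + q) % p = ((b : ℤ) * d + q) % p := by
      rw [← hφcast a, ← hφcast b, hab]
    have h2 : (p : ℤ) ∣ ((a : ℤ) - b) * d := by
      have := dvd_sub_of_emod_eq' h1
      have heq : ((a:ℤ) * d + q) - ((b:ℤ) * d + q) = ((a : ℤ) - b) * d := by ring
      rwa [heq] at this
    have h3 : (p : ℤ) ∣ (a : ℤ) - b := by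
      rcases (intPrime hp).dvd_mul.mp h2 with h | h
      · exact h
      · exact absurd (Int.natCast_dvd_natCast.mp h) hpd
    have h4 : (a : ℤ) - b = 0 := Int.eq_zero_of_abs_lt_dvd h3 (by
      rw [abs_sub_lt_iff]; constructor <;> [skip; skip] <;> push_cast <;> omega)
    omega
  have himlt : ∀ n, φ n < p := by
    intro n
    have := Int.emod_lt_of_pos ((n : ℤ) * d + q) hp0
    have := hφcast n
    omega
  have himage : (Finset.range p).image φ = Finset.range p := by
    apply Finset.eq_of_subset_of_card_le
    · intro x hx
      simp only [Finset.mem_image] at hx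
      obtain ⟨n, _, rfl⟩ := hx
      exact Finset.mem_range.mpr (himlt n)
    · rw [Finset.card_image_of_injOn hinj]
  have hsum : ∑ n ∈ Finset.range p, φ n = ∑ x ∈ Finset.range p, x := by
    calc ∑ n ∈ Finset.range p, φ n
        = ∑ x ∈ (Finset.range p).image φ, x :=
          (Finset.sum_image (f := fun x => x) (fun a ha b hb h => hinj ha hb h)).symm
      _ = ∑ x ∈ Finset.range p, x := by rw [himage]
  calc 2 * ∑ n ∈ Finset.range p, (((n : ℤ) * d + q) % p)
      = ((2 * ∑ n ∈ Finset.range p, φ n : ℕ) : ℤ) := by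
        push_cast
        rw [Finset.sum_congr rfl (fun n _ => (hφcast n).symm)]
    _ = (((∑ x ∈ Finset.range p, x) * 2 : ℕ) : ℤ) := by rw [hsum]; push_cast; ring
    _ = ((p * (p - 1) : ℕ) : ℤ) := by rw [Finset.sum_range_id_mul_two]
    _ = (p : ℤ) * ((p : ℤ) - 1) := by
        rw [Nat.cast_mul, Nat.cast_sub hp.one_le]; push_cast; ring

lemma refl_sum (p d j : ℕ) (hp : p.Prime) (hpd : ¬ p ∣ d) (hj : 2 * j < p) :
    2 * ∑ i ∈ Finset.Ico (j + 1) (p - j), (((i : ℤ) * d) % p)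
      = (p : ℤ) * ((p : ℤ) - 2 * j - 1) := by
  have hp0 : (0 : ℤ) < (p : ℤ) := by exact_mod_cast hp.pos
  have pair : ∀ i ∈ Finset.Ico (j + 1) (p - j),
      ((i : ℤ) * d) % p + (((p - i : ℕ) : ℤ) * d) % p = p := by
    intro i hi
    rw [Finset.mem_Ico] at hi
    have hi1 : 0 < i := by omega
    have hi2 : i < p := by omega
    have hne : ((i : ℤ) * d) % p ≠ 0 := by
      intro h
      have hdvd : (p : ℤ) ∣ (i : ℤ) * d := Int.dvd_of_emod_eq_zero h
      rcases (intPrime hp).dvd_mul.mp hdvd with h' | h'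
      · have := Int.natCast_dvd_natCast.mp h'
        exact absurd (Nat.le_of_dvd hi1 this) (by omega)
      · exact hpd (Int.natCast_dvd_natCast.mp h')
    have hm0 : 0 ≤ ((i : ℤ) * d) % p := Int.emod_nonneg _ hp0.ne'
    have hm1 : ((i : ℤ) * d) % p < p := Int.emod_lt_of_pos _ hp0
    have hcast : ((p - i : ℕ) : ℤ) = (p : ℤ) - i := by
      rw [Nat.cast_sub hi2.le]
    have h2 : (((p - i : ℕ) : ℤ) * d) % p = (p : ℤ) - ((i : ℤ) * d) % p := by
      apply emod_eq_of hp0 (by omega) (by omega)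
      refine ⟨(d : ℤ) - 1 - ((i : ℤ) * d) / p, ?_⟩
      rw [hcast]
      linear_combination Int.mul_ediv_add_emod ((i : ℤ) * d) p
    rw [h2]; ring
  have hswap : ∑ i ∈ Finset.Ico (j + 1) (p - j), (((i : ℤ) * d) % p)
      = ∑ i ∈ Finset.Ico (j + 1) (p - j), ((((p - i : ℕ) : ℤ) * d) % p) := by
    apply Finset.sum_nbij' (fun i => p - i) (fun i => p - i)
    · intro a ha; rw [Finset.mem_Ico] at *; omega
    · intro a ha; rw [Finset.mem_Ico] at *; omega
    · intro a ha; rw [Finset.mem_Ico] at ha; omega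
    · intro a ha; rw [Finset.mem_Ico] at ha; omega
    · intro a ha
      rw [Finset.mem_Ico] at ha
      congr 2
      omega
  have hcard : (Finset.Ico (j + 1) (p - j)).card = p - 2 * j - 1 := by
    rw [Nat.card_Ico]; omega
  calc 2 * ∑ i ∈ Finset.Ico (j + 1) (p - j), (((i : ℤ) * d) % p)
      = ∑ i ∈ Finset.Ico (j + 1) (p - j),
          (((i : ℤ) * d) % p + (((p - i : ℕ) : ℤ) * d) % p) := by
        rw [Finset.sum_add_distrib, ← hswap]; ring
    _ = ∑ i ∈ Finset.Ico (j + 1) (p - j), (p : ℤ) := Finset.sum_congr rfl pair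
    _ = (p : ℤ) * ((p : ℤ) - 2 * j - 1) := by
        rw [Finset.sum_const, hcard, nsmul_eq_mul]
        have : ((p - 2 * j - 1 : ℕ) : ℤ) = (p : ℤ) - 2 * j - 1 := by push_cast [Nat.cast_sub] <;> omega
        rw [this]; ring

theorem aux (p d j : ℕ) (hp : p.Prime) (hpd : ¬ p ∣ d)
    (hj1 : 1 ≤ j) (hj2 : 2 * j < p) : Lj p d j = Lj p d (p - j) := by
  have hp0 : (0 : ℤ) < (p : ℤ) := by exact_mod_cast hp.pos
  set q : ℤ := ((j : ℤ) * d) / p with hq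
  set r : ℤ := ((j : ℤ) * d) % p with hr
  have hqr : (j : ℤ) * d = p * q + r := (Int.mul_ediv_add_emod _ _).symm
  have hr1 : r < p := Int.emod_lt_of_pos _ hp0
  have hr0 : 0 < r := by
    rcases (Int.emod_nonneg ((j : ℤ) * d) hp0.ne').lt_or_eq with h | h
    · exact h
    · exfalso
      have hdvd : (p : ℤ) ∣ (j : ℤ) * d := Int.dvd_of_emod_eq_zero h.symm
      rcases (intPrime hp).dvd_mul.mp hdvd with h' | h'
      · exact absurd (Nat.le_of_dvd (by omega) (Int.natCast_dvd_natCast.mp h')) (by omega)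
      · exact hpd (Int.natCast_dvd_natCast.mp h')
  set q' : ℤ := (((p - j : ℕ) : ℤ) * d) / p with hq'
  set r' : ℤ := (((p - j : ℕ) : ℤ) * d) % p with hrr
  have hcast : ((p - j : ℕ) : ℤ) = (p : ℤ) - j := by
    rw [Nat.cast_sub (by omega)]
  have huniq := (Int.ediv_emod_unique (a := ((p - j : ℕ) : ℤ) * d)
      (b := (p : ℤ)) (q := (d : ℤ) - q - 1) (r := (p : ℤ) - r) hp0).mpr
      ⟨by rw [hcast]; linear_combination hqr, by omega, by omega⟩
  have hq'eq : q' = (d : ℤ) - q - 1 := huniq.1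
  have hr'eq : r' = (p : ℤ) - r := huniq.2
  have hqr' : ((p - j : ℕ) : ℤ) * d = p * q' + r' := (Int.mul_ediv_add_emod _ _).symm
  set F : ℕ → ℤ := fun n => (((n : ℤ) * d + q) % p) with hF
  set G : ℕ → ℤ := fun n => (((n : ℤ) * d) % p) with hG
  -- Step 2 : p * Lj j as a sum
  have step2 : (p : ℤ) * Lj p d j
      = ∑ i ∈ Finset.Ico j p, ((j : ℤ) * d - q - G i + F (i - j)) := by
    have hIcc : Finset.Icc j (p - 1) = Finset.Ico j p := by
      rw [← Finset.Ico_add_one_right_eq_Icc]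
      congr 1
      omega
    rw [Lj, hIcc, Finset.mul_sum]
    apply Finset.sum_congr rfl
    intro i hi
    rw [Finset.mem_Ico] at hi
    rw [floorA, floorB p d i j hp.pos hqr hr0.le hr1]
    have hFij : F (i - j) = ((i : ℤ) * d - (j : ℤ) * d + q) % p := by
      simp only [hF]
      congr 1
      rw [Nat.cast_sub hi.1]
      ring
    rw [hFij]
    simp only [hG]
    have e1 := Int.mul_ediv_add_emod ((i : ℤ) * d) (p : ℤ)
    have e2 := Int.mul_ediv_add_emod ((i : ℤ) * d - (j : ℤ) * d + q) (p : ℤ)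
    linear_combination e1 - e2
  -- Step 2' : p * Lj (p - j) as a sum
  have step2' : (p : ℤ) * Lj p d (p - j)
      = ∑ i ∈ Finset.Ico (p - j) p,
          (((p : ℤ) - j) * d - q' - G i + ((p : ℤ) - 1 - F (2 * p - j - 1 - i))) := by
    have hIcc : Finset.Icc (p - j) (p - 1) = Finset.Ico (p - j) p := by
      rw [← Finset.Ico_add_one_right_eq_Icc]
      congr 1
      omega
    rw [Lj, hIcc, Finset.mul_sum]
    apply Finset.sum_congr rfl
    intro i hi
    rw [Finset.mem_Ico] at hi
    rw [floorA, floorB p d i (p - j) hp.pos hqr' (by omega) (by omega)]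
    have hb' : ((i : ℤ) * d - ((p - j : ℕ) : ℤ) * d + q') % p
        = (p : ℤ) - 1 - F (2 * p - j - 1 - i) := by
      have hn : ((2 * p - j - 1 - i : ℕ) : ℤ) = 2 * p - (j : ℤ) - 1 - i := by
        push_cast [Nat.cast_sub (by omega : i ≤ 2 * p - j - 1),
          Nat.cast_sub (by omega : 1 ≤ 2 * p - j), Nat.cast_sub (by omega : j ≤ 2 * p)]
        ring
      have hF0 : 0 ≤ F (2 * p - j - 1 - i) := Int.emod_nonneg _ hp0.ne'
      have hF1 : F (2 * p - j - 1 - i) < p := Int.emod_lt_of_pos _ hp0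
      apply emod_eq_of hp0 (by omega) (by omega)
      have e3 := Int.mul_ediv_add_emod (((2 * p - j - 1 - i : ℕ) : ℤ) * d + q) (p : ℤ)
      refine ⟨(d : ℤ) - 1 - ((((2 * p - j - 1 - i : ℕ) : ℤ) * d + q) / p), ?_⟩
      simp only [hF]
      linear_combination e3 + (d : ℤ) * hn - (d : ℤ) * hcast + hq'eq
    simp only [hG]
    have e1 := Int.mul_ediv_add_emod ((i : ℤ) * d) (p : ℤ)
    have e2 := Int.mul_ediv_add_emod ((i : ℤ) * d - ((p - j : ℕ) : ℤ) * d + q') (p : ℤ)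
    linear_combination e1 - e2 + hb' + (d : ℤ) * hcast
  -- named partial sums
  set A : ℤ := ∑ i ∈ Finset.Ico (j + 1) (p - j), G i with hA
  set B : ℤ := ∑ i ∈ Finset.Ico (p - j) p, G i with hB
  set C : ℤ := ∑ n ∈ Finset.range (p - j), F n with hC
  set D : ℤ := ∑ i ∈ Finset.Ico (p - j) p, F i with hD
  have h1 : ∑ i ∈ Finset.Ico j p, G i = r + A + B := by
    rw [hA, hB, ← Finset.sum_Ico_consecutive G (by omega : j ≤ p - j) (by omega : p - j ≤ p),
      ← Finset.sum_Ico_consecutive G (by omega : j ≤ j + 1) (by omega : j + 1 ≤ p - j),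
      Nat.Ico_succ_singleton, Finset.sum_singleton, hr]
    try simp only [hG]
    try ring
  have h2 : ∑ i ∈ Finset.Ico j p, F (i - j) = C := by
    rw [hC, Finset.sum_Ico_eq_sum_range]
    apply Finset.sum_congr rfl
    intro k _
    congr 1
    omega
  have E1 : (p : ℤ) * Lj p d j = ((p : ℤ) - j) * ((j : ℤ) * d - q) - (r + A + B) + C := by
    rw [step2]
    simp only [Finset.sum_add_distrib, Finset.sum_sub_distrib, Finset.sum_const,
      Nat.card_Ico, nsmul_eq_mul, hcast]
    rw [h1, h2]
    ring
  have h3 : ∑ i ∈ Finset.Ico (p - j) p, F (2 * p - j - 1 - i) = D := by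
    rw [hD]
    apply Finset.sum_nbij' (fun i => 2 * p - j - 1 - i) (fun i => 2 * p - j - 1 - i)
    · intro a ha; rw [Finset.mem_Ico] at *; omega
    · intro a ha; rw [Finset.mem_Ico] at *; omega
    · intro a ha; rw [Finset.mem_Ico] at ha; omega
    · intro a ha; rw [Finset.mem_Ico] at ha; omega
    · intro a _; rfl
  have hBsub : ∑ i ∈ Finset.Ico (p - j) p, G i = B := hB.symm
  have E2 : (p : ℤ) * Lj p d (p - j)
      = (j : ℤ) * (((p : ℤ) - j) * d - q') - B + ((j : ℤ) * ((p : ℤ) - 1) - D) := by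
    rw [step2']
    simp only [Finset.sum_add_distrib, Finset.sum_sub_distrib, Finset.sum_const,
      Nat.card_Ico, nsmul_eq_mul, Nat.sub_sub_self (by omega : j ≤ p)]
    rw [h3, hBsub]
    ring
  have E3 : 2 * A = (p : ℤ) * ((p : ℤ) - 2 * j - 1) := refl_sum p d j hp hpd hj2
  have E4 : 2 * (C + D) = (p : ℤ) * ((p : ℤ) - 1) := by
    have := period_sum p d hp hpd q
    rw [Finset.range_eq_Ico,
      ← Finset.sum_Ico_consecutive _ (by omega : 0 ≤ p - j) (by omega : p - j ≤ p)] at this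
    rw [hC, hD, Finset.range_eq_Ico]
    linarith [this]
  refine mul_left_cancel₀ (a := 2 * (p : ℤ)) (by positivity) ?_
  have goal2 : 2 * (p : ℤ) * Lj p d j = 2 * (p : ℤ) * Lj p d (p - j) := by
    linear_combination 2 * E1 - 2 * E2 - E3 + E4 + 2 * (j : ℤ) * hq'eq + 2 * hqr
  exact goal2

theorem Lj_symmetry (p d j : ℕ) (hp : p.Prime) (hd : 0 < d) (hpd : ¬ p ∣ d)
    (hj1 : 1 ≤ j) (hj2 : j ≤ p - 1) :
    Lj p d j = Lj p d (p - j) := by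
  have hp2 : 2 ≤ p := hp.two_le
  rcases eq_or_ne p 2 with h2 | h2
  · subst h2
    have : j = 1 := by omega
    subst this
    rfl
  · have hodd : Odd p := hp.odd_of_ne_two h2
    obtain ⟨m, hm⟩ := hodd
    rcases lt_or_gt_of_ne (show 2 * j ≠ p by omega) with h | h
    · exact aux p d j hp hpd hj1 h
    · have hlt : 2 * (p - j) < p := by omega
      have h1 : 1 ≤ p - j := by omega
      have := aux p d (p - j) hp hpd h1 hlt
      rw [show p - (p - j) = j from by omega] at this
      exact this.symm
end

section
/- Let p be an odd prime and d a positive integer not divisible by p. With L_j(d) = Σ_{i=j}^{p-1} ( ⌊i·d/p⌋ - ⌊i·d/p - (1 - 1/p)·j·d/p⌋ ), the maximum of L_j(d) over 1 ≤ j ≤ p-1 is attained at j = (p-1)/2; that is, max_{1 ≤ j ≤ p-1} L_j(d) = L_{(p-1)/2}(d). -/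
open Finset

lemma div_pair (c a b : ℤ) (hc : 0 < c) (hab : c ∣ a + b) (ha : ¬ c ∣ a) :
    a / c + b / c = (a + b) / c - 1 := by
  have h0 : (a % c + b % c) % c = 0 := by
    rw [← Int.add_emod]; exact Int.emod_eq_zero_of_dvd hab
  have ha' : a % c ≠ 0 := fun h => ha (Int.dvd_of_emod_eq_zero h)
  have hb1 : 0 ≤ a % c := Int.emod_nonneg a hc.ne'
  have hb2 : a % c < c := Int.emod_lt_of_pos a hc
  have hb3 : 0 ≤ b % c := Int.emod_nonneg b hc.ne'
  have hb4 : b % c < c := Int.emod_lt_of_pos b hc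
  obtain ⟨k, hk⟩ := Int.dvd_of_emod_eq_zero h0
  have h5 : 0 < c * k := by omega
  have h6 : c * k < c * 2 := by omega
  have h7 : k < 2 := lt_of_mul_lt_mul_left h6 hc.le
  have h8 : 0 < k := by
    by_contra h
    push_neg at h
    have : c * k ≤ 0 := mul_nonpos_of_nonneg_of_nonpos hc.le h
    omega
  have hk1 : k = 1 := by omega
  have h1 : a % c + b % c = c := by rw [hk1, mul_one] at hk; exact hk
  have e1 := Int.mul_ediv_add_emod a c
  have e2 := Int.mul_ediv_add_emod b c
  have e3 := Int.mul_ediv_add_emod (a + b) c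
  rw [Int.emod_eq_zero_of_dvd hab] at e3
  have h2 : c * ((a+b)/c) = c * (a/c + b/c + 1) := by
    have : c * (a/c + b/c + 1) = c * (a/c) + c * (b/c) + c := by ring
    omega
  have := mul_left_cancel₀ hc.ne' h2
  omega


lemma emod_key (p d j k : ℕ) (hp0 : 0 < p) :
    (((k : ℤ) * p + j) * d) % ((p : ℤ)^2)
      = (p : ℤ) * (((k * d + j * d / p) % p : ℕ) : ℤ) + ((j * d % p : ℕ) : ℤ) := by
  set q := j * d / p with hq
  set s := j * d % p with hs
  set v := (k * d + q) % p with hv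
  set u := (k * d + q) / p with hu
  have e1 : p * q + s = j * d := Nat.div_add_mod (j * d) p
  have e2 : p * u + v = k * d + q := Nat.div_add_mod (k * d + q) p
  have hvlt : v < p := Nat.mod_lt _ hp0
  have hslt : s < p := Nat.mod_lt _ hp0
  have h1 : ((k:ℤ) * p + j) * d = (p:ℤ)^2 * u + ((p:ℤ) * v + s) := by
    have e1' : (p:ℤ) * q + s = (j:ℤ) * d := by exact_mod_cast congrArg (Nat.cast : ℕ → ℤ) e1
    have e2' : (p:ℤ) * u + v = (k:ℤ) * d + q := by exact_mod_cast congrArg (Nat.cast : ℕ → ℤ) e2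
    nlinarith [e1', e2']
  rw [h1, add_comm, Int.add_mul_emod_self_left]
  apply Int.emod_eq_of_lt
  · positivity
  · have hv0 : (v:ℤ) < (p:ℤ) := by exact_mod_cast hvlt
    have hv' : (v:ℤ) ≤ (p:ℤ) - 1 := by omega
    have hs' : (s:ℤ) < (p:ℤ) := by exact_mod_cast hslt
    nlinarith [hv', hs']

lemma sum_mod_bij (p d q : ℕ) (hp : p.Prime) (hpd : ¬ p ∣ d) :
    ∑ k ∈ range p, (((k * d + q) % p : ℕ) : ℤ) = ∑ t ∈ range p, (t : ℤ) := by
  have hp0 : 0 < p := hp.pos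
  have hco : Nat.gcd p d = 1 := hp.coprime_iff_not_dvd.mpr hpd
  have inj : ∀ a₁ a₂ : ℕ, a₁ ∈ range p → a₂ ∈ range p →
      (a₁ * d + q) % p = (a₂ * d + q) % p → a₁ = a₂ := by
    intro a b ha hb hab
    have h1 : a * d + q ≡ b * d + q [MOD p] := hab
    have h2 : a * d ≡ b * d [MOD p] := h1.add_right_cancel' q
    have h3 : a ≡ b [MOD p] := Nat.ModEq.cancel_right_of_coprime hco h2
    have ha' := mem_range.mp ha; have hb' := mem_range.mp hb
    have h4 : a % p = b % p := h3
    rwa [Nat.mod_eq_of_lt ha', Nat.mod_eq_of_lt hb'] at h4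
  apply Finset.sum_bij (i := fun k _ => (k * d + q) % p)
  · intro a ha; exact mem_range.mpr (Nat.mod_lt _ hp0)
  · exact fun a₁ h₁ a₂ h₂ => inj a₁ a₂ h₁ h₂
  · intro b hb
    obtain ⟨a, ha, h⟩ := Finset.surj_on_of_inj_on_of_card_le
      (fun a (_ : a ∈ range p) => (a * d + q) % p)
      (fun a ha => mem_range.mpr (Nat.mod_lt _ hp0)) inj (le_refl _) b hb
    exact ⟨a, ha, h.symm⟩
  · intro a ha; rfl

lemma I2 (p d j : ℕ) (hp : p.Prime) (hpd : ¬ p ∣ d) :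
    2 * ∑ k ∈ range p, (((k:ℤ) * p + j) * d) / (p:ℤ)^2
      = ((p:ℤ) - 1) * ((d:ℤ) - 1) + 2 * (((j:ℤ) * d) / (p:ℤ)) := by
  have hp0 : 0 < p := hp.pos
  have hp0' : (0:ℤ) < (p:ℤ) := by exact_mod_cast hp0
  have hp2 : ((p:ℤ)^2) ≠ 0 := by positivity
  set S := ∑ k ∈ range p, (((k:ℤ) * p + j) * d) / (p:ℤ)^2 with hS
  set T := ∑ t ∈ range p, (t : ℤ) with hT0
  set Q := ((j:ℤ) * d) / (p:ℤ) with hQ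
  have key : ∀ k ∈ range p, (p:ℤ)^2 * ((((k:ℤ)*p+j)*d) / (p:ℤ)^2)
      = ((k:ℤ)*p+j)*d - ((p:ℤ) * (((k*d + j*d/p) % p : ℕ):ℤ) + ((j*d%p : ℕ):ℤ)) := by
    intro k _
    have h := Int.mul_ediv_add_emod (((k:ℤ)*p+j)*d) ((p:ℤ)^2)
    rw [emod_key p d j k hp0] at h
    linarith
  have hsum : (p:ℤ)^2 * S
      = (∑ k ∈ range p, ((k:ℤ)*p+j)*d)
        - ((p:ℤ) * (∑ k ∈ range p, (((k*d + j*d/p) % p : ℕ):ℤ)) + (p:ℤ) * ((j*d%p : ℕ):ℤ)) := by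
    rw [hS, Finset.mul_sum, Finset.sum_congr rfl key, Finset.sum_sub_distrib,
      Finset.sum_add_distrib, ← Finset.mul_sum, Finset.sum_const, card_range]
    push_cast
    ring
  rw [sum_mod_bij p d (j*d/p) hp hpd] at hsum
  have hT : 2 * T = (p:ℤ) * ((p:ℤ) - 1) := by
    have := Finset.sum_range_id_mul_two p
    have h' : ((∑ i ∈ range p, i : ℕ) : ℤ) * 2 = (p:ℤ) * ((p:ℤ) - 1) := by
      have hcast := congrArg (Nat.cast : ℕ → ℤ) this
      push_cast [Nat.cast_sub hp.one_le] at hcast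
      push_cast
      linarith
    rw [hT0]
    push_cast at h' ⊢
    linarith
  have h2 : ∑ k ∈ range p, ((k:ℤ)*p+j)*d = T*((p:ℤ)*d) + (p:ℤ)*((j:ℤ)*d) := by
    simp only [add_mul, Finset.sum_add_distrib, ← Finset.sum_mul, Finset.sum_const,
      card_range, nsmul_eq_mul, hT0]
    ring
  have hcm : ((j*d%p : ℕ):ℤ) = ((j:ℤ)*d) % (p:ℤ) := by push_cast; ring_nf
  have h3 : (p:ℤ) * Q + ((j*d%p : ℕ):ℤ) = (j:ℤ)*d := by
    rw [hcm, hQ]; exact Int.mul_ediv_add_emod _ _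
  rw [h2] at hsum
  have goal' : (p:ℤ)^2 * (2 * S) = (p:ℤ)^2 * (((p:ℤ) - 1) * ((d:ℤ) - 1) + 2 * Q) := by
    linear_combination 2 * hsum + ((p:ℤ)*(d:ℤ) - (p:ℤ)) * hT - 2 * (p:ℤ) * h3
  exact mul_left_cancel₀ hp2 goal'

lemma pair1 (p d : ℕ) (hp : p.Prime) (hpd : ¬ p ∣ d) (n : ℤ) (hn : ¬ (p:ℤ) ∣ n) :
    n * d / (p:ℤ) + ((p:ℤ) - n) * d / (p:ℤ) = (d:ℤ) - 1 := by
  have hp0 : (0:ℤ) < p := by exact_mod_cast hp.pos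
  have hprime : Prime (p:ℤ) := Nat.prime_iff_prime_int.mp hp
  have hnd : ¬ (p:ℤ) ∣ n * d := by
    intro h
    rcases hprime.dvd_mul.mp h with h | h
    · exact hn h
    · exact hpd (by exact_mod_cast h)
  have hdvd : (p:ℤ) ∣ n * d + ((p:ℤ) - n) * d := ⟨d, by ring⟩
  have := div_pair (p:ℤ) (n*d) (((p:ℤ)-n)*d) hp0 hdvd hnd
  rw [this]
  have : n * d + ((p:ℤ) - n) * d = (p:ℤ) * d := by ring
  rw [this, Int.mul_ediv_cancel_left _ hp0.ne']

lemma pair2 (p d : ℕ) (hp : p.Prime) (hpd : ¬ p ∣ d) (m : ℤ) (hm : ¬ (p:ℤ) ∣ m) :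
    m * d / (p:ℤ)^2 + ((p:ℤ)^2 - m) * d / (p:ℤ)^2 = (d:ℤ) - 1 := by
  have hp0 : (0:ℤ) < p := by exact_mod_cast hp.pos
  have hp2 : (0:ℤ) < (p:ℤ)^2 := by positivity
  have hprime : Prime (p:ℤ) := Nat.prime_iff_prime_int.mp hp
  have hnd : ¬ (p:ℤ)^2 ∣ m * d := by
    intro h
    have h' : (p:ℤ) ∣ m * d := dvd_trans (dvd_pow_self _ two_ne_zero) h
    rcases hprime.dvd_mul.mp h' with h'' | h''
    · exact hm h''
    · exact hpd (by exact_mod_cast h'')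
  have hdvd : (p:ℤ)^2 ∣ m * d + ((p:ℤ)^2 - m) * d := ⟨d, by ring⟩
  have := div_pair ((p:ℤ)^2) (m*d) (((p:ℤ)^2-m)*d) hp2 hdvd hnd
  rw [this]
  have : m * d + ((p:ℤ)^2 - m) * d = (p:ℤ)^2 * d := by ring
  rw [this, Int.mul_ediv_cancel_left _ hp2.ne']

lemma I1 (p d : ℕ) (hp : p.Prime) (hpd : ¬ p ∣ d) :
    2 * ∑ i ∈ Ico 1 p, ((i:ℤ) * d) / (p:ℤ) = ((p:ℤ) - 1) * ((d:ℤ) - 1) := by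
  have hp0 : 0 < p := hp.pos
  have hrefl : ∑ i ∈ Ico 1 p, ((i:ℤ) * d) / (p:ℤ)
      = ∑ i ∈ Ico 1 p, (((p:ℤ) - (i:ℤ)) * d) / (p:ℤ) := by
    apply Finset.sum_nbij' (i := fun i => p - i) (j := fun i => p - i)
    · intro a ha; have := mem_Ico.mp ha; exact mem_Ico.mpr (by omega)
    · intro a ha; have := mem_Ico.mp ha; exact mem_Ico.mpr (by omega)
    · intro a ha; have := mem_Ico.mp ha; omega
    · intro a ha; have := mem_Ico.mp ha; omega
    · intro a ha
      have h := mem_Ico.mp ha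
      have : ((p - a : ℕ) : ℤ) = (p:ℤ) - (a:ℤ) := by
        have : a ≤ p := by omega
        push_cast [Nat.cast_sub this]; ring
      rw [this]; ring_nf
  have h2 : 2 * ∑ i ∈ Ico 1 p, ((i:ℤ) * d) / (p:ℤ)
      = ∑ i ∈ Ico 1 p, (((i:ℤ) * d) / (p:ℤ) + (((p:ℤ) - (i:ℤ)) * d) / (p:ℤ)) := by
    rw [Finset.sum_add_distrib, ← hrefl]; ring
  have h3 : ∀ i ∈ Ico 1 p, ((i:ℤ) * d) / (p:ℤ) + (((p:ℤ) - (i:ℤ)) * d) / (p:ℤ) = (d:ℤ) - 1 := by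
    intro i hi
    have h := mem_Ico.mp hi
    apply pair1 p d hp hpd
    intro hdvd
    have : p ∣ i := by exact_mod_cast hdvd
    have := Nat.le_of_dvd (by omega) this
    omega
  rw [h2, Finset.sum_congr rfl h3, Finset.sum_const, Nat.card_Ico, nsmul_eq_mul]
  push_cast [Nat.cast_sub hp.one_le]
  ring


lemma Lj_eq (p d : ℕ) (hp0 : 0 < p) (j : ℕ) :
    Lj p d j = ∑ i ∈ Ico j p,
      (((i:ℤ) * d) / (p:ℤ) - (((i:ℤ) * p - ((p:ℤ) - 1) * j) * d) / (p:ℤ)^2) := by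
  have hicc : Finset.Icc j (p-1) = Finset.Ico j p := by
    rw [← Finset.Ico_add_one_right_eq_Icc]; congr 1; omega
  have hpQ : (p:ℚ) ≠ 0 := by positivity
  rw [Lj, hicc]
  apply Finset.sum_congr rfl
  intro i hi
  have e1 : ((i:ℚ) * d) / p = (((i:ℤ) * (d:ℤ) : ℤ):ℚ) / ((p:ℕ):ℚ) := by push_cast; ring
  have e2 : ((i:ℚ) * d) / p - (1 - 1/(p:ℚ)) * ((j:ℚ) * d) / p
      = ((((i:ℤ) * p - ((p:ℤ) - 1) * j) * d : ℤ):ℚ) / ((p^2:ℕ):ℚ) := by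
    push_cast
    field_simp
  rw [e2, e1, Rat.floor_intCast_div_natCast, Rat.floor_intCast_div_natCast]
  push_cast
  ring

lemma master (p d j : ℕ) (hp : p.Prime) (hpd : ¬ p ∣ d) (hj1 : 1 ≤ j) (hj2 : j < p) :
    Lj p d j = ∑ n ∈ Ico 1 (j+1),
      ((d:ℤ) - 1 - ((n:ℤ) * d) / (p:ℤ) - (((n:ℤ) * p - j) * d) / (p:ℤ)^2) := by
  have hp0 : 0 < p := hp.pos
  rw [Lj_eq p d hp0 j, Finset.sum_sub_distrib]
  have hA : ∑ i ∈ Ico 1 p, ((i:ℤ)*d)/(p:ℤ)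
      = (∑ i ∈ Ico 1 j, ((i:ℤ)*d)/(p:ℤ)) + ∑ i ∈ Ico j p, ((i:ℤ)*d)/(p:ℤ) :=
    (Finset.sum_Ico_consecutive _ hj1 (le_of_lt hj2)).symm
  have hC : ∑ i ∈ Ico j p, (((i:ℤ)*p - ((p:ℤ)-1)*j)*d)/(p:ℤ)^2
      = ∑ k ∈ Ico 0 (p-j), (((k:ℤ)*p + j)*d)/(p:ℤ)^2 := by
    apply Finset.sum_nbij' (i := fun i => i - j) (j := fun k => k + j)
    · intro a ha; have := mem_Ico.mp ha; exact mem_Ico.mpr (by omega)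
    · intro a ha; have := mem_Ico.mp ha; exact mem_Ico.mpr (by omega)
    · intro a ha; have := mem_Ico.mp ha; omega
    · intro a ha; have := mem_Ico.mp ha; omega
    · intro a ha
      have h := mem_Ico.mp ha
      have hc : ((a - j : ℕ):ℤ) = (a:ℤ) - j := by
        push_cast [Nat.cast_sub h.1]; ring
      rw [hc]; ring_nf
  have hCs : ∑ k ∈ Ico 0 p, (((k:ℤ)*p + j)*d)/(p:ℤ)^2
      = (∑ k ∈ Ico 0 (p-j), (((k:ℤ)*p + j)*d)/(p:ℤ)^2)
        + ∑ k ∈ Ico (p-j) p, (((k:ℤ)*p + j)*d)/(p:ℤ)^2 :=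
    (Finset.sum_Ico_consecutive _ (by omega) (by omega)).symm
  have htail : ∑ k ∈ Ico (p-j) p, (((k:ℤ)*p + j)*d)/(p:ℤ)^2
      = ∑ n ∈ Ico 1 (j+1), ((d:ℤ) - 1 - (((n:ℤ)*p - j)*d)/(p:ℤ)^2) := by
    apply Finset.sum_nbij' (i := fun k => p - k) (j := fun n => p - n)
    · intro a ha; have := mem_Ico.mp ha; exact mem_Ico.mpr (by omega)
    · intro a ha; have := mem_Ico.mp ha; exact mem_Ico.mpr (by omega)
    · intro a ha; have := mem_Ico.mp ha; omega
    · intro a ha; have := mem_Ico.mp ha; omega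
    · intro a ha
      have h := mem_Ico.mp ha
      have hle : a ≤ p := by omega
      have hc : ((p - a : ℕ):ℤ) = (p:ℤ) - a := by push_cast [Nat.cast_sub hle]; ring
      rw [hc]
      have hm : ¬ (p:ℤ) ∣ (((p:ℤ) - a)*p - j) := by
        intro hdvd
        have h2 : (p:ℤ) ∣ ((p:ℤ) - a)*p := dvd_mul_left _ _
        have h3 : (p:ℤ) ∣ (j:ℤ) := by
          have := dvd_sub h2 hdvd
          simpa using this
        have h4 : p ∣ j := by exact_mod_cast h3
        have := Nat.le_of_dvd (by omega) h4
        omega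
      have hpair := pair2 p d hp hpd (((p:ℤ)-a)*p - j) hm
      have harg : ((p:ℤ)^2 - (((p:ℤ)-a)*p - j)) = (a:ℤ)*p + j := by ring
      rw [harg] at hpair
      linarith
  have hI1 := I1 p d hp hpd
  have hI2 := I2 p d j hp hpd
  rw [Finset.range_eq_Ico] at hI2
  have hRHS : ∑ n ∈ Ico 1 (j+1),
        ((d:ℤ) - 1 - ((n:ℤ) * d) / (p:ℤ) - (((n:ℤ)*p - j)*d)/(p:ℤ)^2)
      = (∑ n ∈ Ico 1 (j+1), ((d:ℤ) - 1 - (((n:ℤ)*p - j)*d)/(p:ℤ)^2))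
        - ∑ n ∈ Ico 1 (j+1), ((n:ℤ) * d) / (p:ℤ) := by
    rw [← Finset.sum_sub_distrib]
    apply Finset.sum_congr rfl
    intros; ring
  have hFtop : ∑ n ∈ Ico 1 (j+1), ((n:ℤ) * d) / (p:ℤ)
      = (∑ n ∈ Ico 1 j, ((n:ℤ) * d) / (p:ℤ)) + ((j:ℤ) * d) / (p:ℤ) :=
    Finset.sum_Ico_succ_top hj1 _
  rw [hC, hRHS]
  linarith [hA, hCs, htail, hI1, hI2, hFtop]

lemma symm_lemma (p d j : ℕ) (hp : p.Prime) (hpd : ¬ p ∣ d) (hj1 : 1 ≤ j) (hj2 : j < p) :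
    Lj p d (p - j) = Lj p d j := by
  rw [master p d j hp hpd hj1 hj2, Lj_eq p d hp.pos (p-j), Finset.sum_sub_distrib]
  have hA' : ∑ i ∈ Ico (p-j) p, ((i:ℤ)*d)/(p:ℤ)
      = ∑ n ∈ Ico 1 (j+1), ((d:ℤ) - 1 - ((n:ℤ)*d)/(p:ℤ)) := by
    apply Finset.sum_nbij' (i := fun i => p - i) (j := fun n => p - n)
    · intro a ha; have := mem_Ico.mp ha; exact mem_Ico.mpr (by omega)
    · intro a ha; have := mem_Ico.mp ha; exact mem_Ico.mpr (by omega)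
    · intro a ha; have := mem_Ico.mp ha; omega
    · intro a ha; have := mem_Ico.mp ha; omega
    · intro a ha
      have h := mem_Ico.mp ha
      have hle : a ≤ p := by omega
      have hc : ((p - a : ℕ):ℤ) = (p:ℤ) - a := by push_cast [Nat.cast_sub hle]; ring
      rw [hc]
      have hn : ¬ (p:ℤ) ∣ ((p:ℤ) - a) := by
        intro hdvd
        have h3 : (p:ℤ) ∣ (a:ℤ) := by
          have := dvd_sub (dvd_refl (p:ℤ)) hdvd
          simpa using this
        have h4 : p ∣ a := by exact_mod_cast h3
        have := Nat.le_of_dvd (by omega) h4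
        omega
      have hpair := pair1 p d hp hpd ((p:ℤ) - a) hn
      have harg : ((p:ℤ) - ((p:ℤ) - a)) = (a:ℤ) := by ring
      rw [harg] at hpair
      linarith
  have hC' : ∑ i ∈ Ico (p-j) p, (((i:ℤ)*p - ((p:ℤ)-1)*((p-j : ℕ):ℤ))*d)/(p:ℤ)^2
      = ∑ n ∈ Ico 1 (j+1), (((n:ℤ)*p - j)*d)/(p:ℤ)^2 := by
    apply Finset.sum_nbij' (i := fun i => i - (p - j) + 1) (j := fun n => p - j + n - 1)
    · intro a ha; have := mem_Ico.mp ha; exact mem_Ico.mpr (by omega)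
    · intro a ha; have := mem_Ico.mp ha; exact mem_Ico.mpr (by omega)
    · intro a ha; have := mem_Ico.mp ha; omega
    · intro a ha; have := mem_Ico.mp ha; omega
    · intro a ha
      have h := mem_Ico.mp ha
      have hc1 : ((a - (p - j) + 1 : ℕ):ℤ) = (a:ℤ) - (p:ℤ) + (j:ℤ) + 1 := by
        have h1 : p - j ≤ a := h.1
        have h2 : j ≤ p := by omega
        push_cast [Nat.cast_sub h1, Nat.cast_sub h2]; ring
      have hc2 : ((p - j : ℕ):ℤ) = (p:ℤ) - (j:ℤ) := by
        have h2 : j ≤ p := by omega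
        push_cast [Nat.cast_sub h2]; ring
      rw [hc1, hc2]; ring_nf
  rw [hA', hC', ← Finset.sum_sub_distrib]

lemma mono_lemma (p d j : ℕ) (hp : p.Prime) (hpd : ¬ p ∣ d) (hd : 0 < d)
    (hj1 : 1 ≤ j) (hj2 : 2*(j+1) ≤ p - 1) :
    Lj p d j ≤ Lj p d (j+1) := by
  have hp0 : 0 < p := hp.pos
  have hp0' : (0:ℤ) < (p:ℤ) := by exact_mod_cast hp0
  have hd' : (1:ℤ) ≤ (d:ℤ) := by exact_mod_cast hd
  rw [master p d j hp hpd hj1 (by omega), master p d (j+1) hp hpd (by omega) (by omega)]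
  rw [Finset.sum_Ico_succ_top (show 1 ≤ j+1 by omega)]
  have hterm : ∀ n ∈ Ico 1 (j+1),
      ((d:ℤ) - 1 - ((n:ℤ) * d) / (p:ℤ) - (((n:ℤ) * p - j) * d) / (p:ℤ)^2)
      ≤ ((d:ℤ) - 1 - ((n:ℤ) * d) / (p:ℤ) - (((n:ℤ) * p - (j+1:ℕ)) * d) / (p:ℤ)^2) := by
    intro n hn
    have hdivle : (((n:ℤ) * p - (j+1:ℕ)) * d) / (p:ℤ)^2 ≤ (((n:ℤ) * p - j) * d) / (p:ℤ)^2 := by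
      apply Int.ediv_le_ediv (by positivity)
      have : ((n:ℤ) * p - (j+1:ℕ)) ≤ ((n:ℤ) * p - j) := by push_cast; omega
      exact mul_le_mul_of_nonneg_right this (by positivity)
    linarith
  have hsum := Finset.sum_le_sum hterm
  have hhead : 0 ≤ (d:ℤ) - 1 - (((j+1:ℕ):ℤ) * d) / (p:ℤ)
      - ((((j+1:ℕ):ℤ) * p - (j+1:ℕ)) * d) / (p:ℤ)^2 := by
    set A := (((j+1:ℕ):ℤ) * d) / (p:ℤ) with hA
    set B := ((((j+1:ℕ):ℤ) * p - (j+1:ℕ)) * d) / (p:ℤ)^2 with hB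
    have e3 : (p:ℤ) * A ≤ ((j+1:ℕ):ℤ) * d := by
      rw [hA]
      have h1 := Int.mul_ediv_add_emod (((j+1:ℕ):ℤ) * d) (p:ℤ)
      have h2 := Int.emod_nonneg (((j+1:ℕ):ℤ) * d) hp0'.ne'
      linarith
    have e4 : (p:ℤ)^2 * B ≤ (((j+1:ℕ):ℤ) * p - (j+1:ℕ)) * d := by
      rw [hB]
      have h1 := Int.mul_ediv_add_emod ((((j+1:ℕ):ℤ) * p - (j+1:ℕ)) * d) ((p:ℤ)^2)
      have h2 := Int.emod_nonneg ((((j+1:ℕ):ℤ) * p - (j+1:ℕ)) * d) (by positivity : ((p:ℤ)^2) ≠ 0)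
      linarith
    have e5 : 2*((j+1:ℕ):ℤ) ≤ (p:ℤ) - 1 := by
      have : ((2*(j+1) : ℕ):ℤ) ≤ ((p - 1 : ℕ):ℤ) := by exact_mod_cast hj2
      push_cast [Nat.cast_sub (show 1 ≤ p by omega)] at this
      push_cast
      linarith
    by_contra hcon
    push_neg at hcon
    have hAB : (d:ℤ) ≤ A + B := by linarith
    have c2 : (p:ℤ)^2 * (d:ℤ) ≤ (p:ℤ)^2 * (A + B) := by
      apply mul_le_mul_of_nonneg_left hAB (by positivity)
    nlinarith [mul_le_mul_of_nonneg_left e3 hp0'.le, e4, c2,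
      mul_le_mul_of_nonneg_right (mul_le_mul_of_nonneg_right e5
        (by linarith : (0:ℤ) ≤ 2*(p:ℤ)-1)) (by linarith : (0:ℤ) ≤ (d:ℤ)), hp0', hd']
  calc ∑ n ∈ Ico 1 (j+1), ((d:ℤ) - 1 - ((n:ℤ) * d) / (p:ℤ) - (((n:ℤ) * p - j) * d) / (p:ℤ)^2)
      ≤ ∑ n ∈ Ico 1 (j+1), ((d:ℤ) - 1 - ((n:ℤ) * d) / (p:ℤ) - (((n:ℤ) * p - (j+1:ℕ)) * d) / (p:ℤ)^2) := hsum
    _ ≤ _ := by linarith [hhead]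

theorem Lj_max_at_half (p d : ℕ) (hp : p.Prime) (hodd : Odd p) (hd : 0 < d)
    (hpd : ¬ p ∣ d) :
    (Finset.Icc 1 (p - 1)).sup' (Finset.nonempty_Icc.mpr (by have := hp.two_le; omega))
      (fun j => Lj p d j) = Lj p d ((p - 1) / 2) := by
  have hp2 := hp.two_le
  have hp3 : 3 ≤ p := by
    obtain ⟨m, hm⟩ := hodd; omega
  set h := (p - 1) / 2 with hh0
  have hh : 2 * h = p - 1 := by
    obtain ⟨m, hm⟩ := hodd; omega
  have chain : ∀ k, ∀ i, 1 ≤ i → i + k = h → Lj p d i ≤ Lj p d h := by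
    intro k
    induction k with
    | zero =>
      intro i h1 h2
      have : i = h := by omega
      rw [this]
    | succ k ih =>
      intro i h1 h2
      exact le_trans (mono_lemma p d i hp hpd hd h1 (by omega)) (ih (i+1) (by omega) (by omega))
  apply le_antisymm
  · apply Finset.sup'_le
    intro j hj
    have hj' := Finset.mem_Icc.mp hj
    by_cases hcase : j ≤ h
    · exact chain (h - j) j hj'.1 (by omega)
    · have hs := symm_lemma p d (p - j) hp hpd (by omega) (by omega)
      rw [show p - (p - j) = j from by omega] at hs
      rw [hs]
      exact chain (h - (p - j)) (p - j) (by omega) (by omega)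
  · exact Finset.le_sup' _ (Finset.mem_Icc.mpr ⟨by omega, by omega⟩)
end

section
/- For p = 3 and any positive integer d not divisible by 3, the quantity L(d) := max_{1 ≤ j ≤ 2} Σ_{i=j}^{2} ( ⌊i·d/3⌋ - ⌊i·d/3 - (2/3)·(j·d/3)⌋ ) equals ⌈2d/3⌉ + ⌈d/3⌉ - ⌈d/9⌉ - ⌈4d/9⌉. -/
private lemma floo (a : ℤ) (k : ℕ) (x : ℚ) (h : x = (a:ℚ)/(k:ℚ)) : ⌊x⌋ = a/(k:ℤ) := by
  rw [h]; exact Rat.floor_intCast_div_natCast a k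

private lemma ceil (a : ℤ) (k : ℕ) (x : ℚ) (h : x = (a:ℚ)/(k:ℚ)) : ⌈x⌉ = -((-a)/(k:ℤ)) := by
  rw [h, ← neg_neg ⌈(a:ℚ)/(k:ℚ)⌉, ← Int.floor_neg, ← neg_div, ← Int.cast_neg,
    Rat.floor_intCast_div_natCast]

theorem lowerbound_p3 (d : ℕ) (hd : 0 < d) (hpd : ¬ (3 ∣ d)) :
    (Finset.Icc (1:ℕ) 2).sup' (Finset.nonempty_Icc.mpr (by omega))
      (fun (j : ℕ) => ∑ i ∈ Finset.Icc j 2,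
        (⌊((i : ℚ) * d) / 3⌋ - ⌊((i : ℚ) * d) / 3 - (2 / 3) * ((j : ℚ) * d / 3)⌋)) =
    ⌈(2 * (d : ℚ)) / 3⌉ + ⌈(d : ℚ) / 3⌉ - ⌈(d : ℚ) / 9⌉ - ⌈(4 * (d : ℚ)) / 9⌉ := by
  have h32 : Finset.Icc (1:ℕ) 2 = {1, 2} := rfl
  have hs1 : Finset.Icc (1:ℕ) 2 = {1, 2} := rfl
  have hs2 : Finset.Icc (2:ℕ) 2 = {2} := rfl
  show (({1,2}:Finset ℕ).sup' (by decide) fun (j : ℕ) => ∑ i ∈ Finset.Icc j 2,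
        (⌊((i : ℚ) * d) / 3⌋ - ⌊((i : ℚ) * d) / 3 - (2 / 3) * ((j : ℚ) * d / 3)⌋)) = _
  rw [Finset.sup'_insert (H := Finset.singleton_nonempty 2), Finset.sup'_singleton]
  rw [hs1, hs2, Finset.sum_insert (by decide), Finset.sum_singleton, Finset.sum_singleton]
  rw [floo d 3 (((1:ℕ):ℚ) * d / 3) (by push_cast; ring),
      floo (d:ℤ) 9 (((1:ℕ):ℚ) * d / 3 - 2/3 * (((1:ℕ):ℚ) * d / 3)) (by push_cast; ring),
      floo (2*d) 3 (((2:ℕ):ℚ) * d / 3) (by push_cast; ring),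
      floo (4*d) 9 (((2:ℕ):ℚ) * d / 3 - 2/3 * (((1:ℕ):ℚ) * d / 3)) (by push_cast; ring),
      floo (2*d) 9 (((2:ℕ):ℚ) * d / 3 - 2/3 * (((2:ℕ):ℚ) * d / 3)) (by push_cast; ring),
      ceil (2*d) 3 (2 * (d:ℚ) / 3) (by push_cast; ring),
      ceil d 3 ((d:ℚ) / 3) (by push_cast; ring),
      ceil d 9 ((d:ℚ) / 9) (by push_cast; ring),
      ceil (4*d) 9 (4 * (d:ℚ) / 9) (by push_cast; ring)]
  have h3 : ¬ ((3:ℤ) ∣ (d:ℤ)) := by exact_mod_cast hpd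
  have h9 : (d:ℤ)%9 = 1 ∨ (d:ℤ)%9 = 2 ∨ (d:ℤ)%9 = 4 ∨ (d:ℤ)%9 = 5 ∨
      (d:ℤ)%9 = 7 ∨ (d:ℤ)%9 = 8 := by omega
  rcases h9 with h|h|h|h|h|h <;> omega
end

section
/- Let p be an odd prime, d a positive integer with p ∤ d, and j an integer with 1 ≤ j < p - j. With S₂ = Σ_{i=j}^{p-1} ⌊i·d/p - (1-1/p)·j·d/p⌋ and S₃ = Σ_{i=p-j}^{p-1} ⌊i·d/p - (1-1/p)·(p-j)·d/p⌋, one has S₂ - S₃ = j + (p-1)(d-1)/2 - j·d + ⌊j·d/p⌋. -/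
open Finset


private lemma ediv_neg_add (p : ℤ) (hp : 0 < p) (n : ℤ) : (-n) / p + (n - 1) / p = -1 := by
  have h := Int.mul_ediv_add_emod (n-1) p
  have hr0 : 0 ≤ (n-1) % p := Int.emod_nonneg _ hp.ne'
  have hr1 : (n-1) % p < p := Int.emod_lt_of_pos _ hp
  have hn : -n = (p - 1 - (n-1) % p) + p * (-((n-1)/p) - 1) := by linarith
  rw [hn, Int.add_mul_ediv_left _ _ hp.ne',
    Int.ediv_eq_zero_of_lt (by omega) (by omega)]
  ring

private lemma emod_sum_eq (p d A : ℕ) (hp : p.Prime) (hpd : ¬ p ∣ d) :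
    ∑ k ∈ range p, ((k * d + A) % p) = ∑ k ∈ range p, k := by
  have hco : Nat.Coprime d p := Nat.Coprime.symm ((Nat.Prime.coprime_iff_not_dvd hp).mpr hpd)
  have hinj : Set.InjOn (fun k => (k * d + A) % p) (range p) := by
    intro a ha b hb hab
    simp only [coe_range, Set.mem_Iio] at ha hb
    have h1 : a * d + A ≡ b * d + A [MOD p] := hab
    have h2 : a * d ≡ b * d [MOD p] := h1.add_right_cancel' A
    have h3 : a ≡ b [MOD p] := Nat.ModEq.cancel_right_of_coprime (by rwa [Nat.coprime_comm] at hco) h2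
    have := h3.eq_of_lt_of_lt ha hb
    exact this
  have hsub : (range p).image (fun k => (k * d + A) % p) ⊆ range p := by
    intro x hx
    simp only [mem_image, mem_range] at hx ⊢
    obtain ⟨k, _, rfl⟩ := hx
    exact Nat.mod_lt _ hp.pos
  have himg : (range p).image (fun k => (k * d + A) % p) = range p :=
    eq_of_subset_of_card_le hsub (by rw [card_image_of_injOn hinj])
  conv_rhs => rw [← himg]
  rw [sum_image (fun x hx y hy h => hinj (by simpa using hx) (by simpa using hy) h)]

private lemma full_sum (p d A : ℕ) (hp : p.Prime) (hpd : ¬ p ∣ d) :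
    2 * ∑ k ∈ range p, (((k:ℤ) * d + A) / p) = ((d:ℤ) - 1) * ((p:ℤ) - 1) + 2 * A := by
  have hp0 : (0:ℤ) < p := by exact_mod_cast hp.pos
  apply mul_left_cancel₀ hp0.ne'
  have h1 : (p:ℤ) * ∑ k ∈ range p, (((k:ℤ) * d + A) / p)
      = (∑ k ∈ range p, ((k:ℤ) * d + A)) - ∑ k ∈ range p, (((k:ℤ) * d + A) % p) := by
    rw [mul_sum, ← sum_sub_distrib]
    refine sum_congr rfl fun k _ => ?_
    have := Int.mul_ediv_add_emod ((k:ℤ) * d + A) p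
    linarith
  have h2 : ∑ k ∈ range p, (((k:ℤ) * d + A) % p) = ∑ k ∈ range p, (k:ℤ) := by
    have h := congrArg (Nat.cast : ℕ → ℤ) (emod_sum_eq p d A hp hpd)
    push_cast at h
    convert h using 2
  have h3 : ∑ k ∈ range p, ((k:ℤ) * d + A) = (∑ k ∈ range p, (k:ℤ)) * d + p * A := by
    rw [sum_add_distrib, ← sum_mul, sum_const, card_range]
    simp [mul_comm]
  have h4 : (∑ k ∈ range p, (k:ℤ)) * 2 = p * (p - 1) := by
    have h := congrArg (Nat.cast : ℕ → ℤ) (Finset.sum_range_id_mul_two p)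
    push_cast [Nat.cast_sub hp.one_le] at h
    exact h
  linear_combination 2*h1 + 2*h3 - 2*h2 + ((d:ℤ)-1)*h4

private lemma floor_aux (p : ℕ) (hp : 0 < p) (m r : ℤ) (h0 : 0 ≤ r) (h1 : r < p) :
    ⌊(m : ℚ) / p + (r : ℚ) / (p : ℚ) ^ 2⌋ = m / p := by
  have hp0 : (0:ℚ) < (p:ℚ) := by exact_mod_cast hp
  have hpne : (p:ℚ) ≠ 0 := ne_of_gt hp0
  have hpz : (p:ℤ) ≠ 0 := by exact_mod_cast hp.ne'
  have hmod0 : (0:ℤ) ≤ m % p := Int.emod_nonneg m hpz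
  have hmodlt : m % p < p := Int.emod_lt_of_pos m (by exact_mod_cast hp)
  have hm : (m:ℚ) = p * ((m / p : ℤ):ℚ) + ((m % p : ℤ):ℚ) := by
    exact_mod_cast (Int.mul_ediv_add_emod m p).symm
  have key : (m:ℚ)/p + (r:ℚ)/(p:ℚ)^2
      = ((m / p : ℤ):ℚ) + (((m % p : ℤ):ℚ) * p + r)/(p:ℚ)^2 := by
    rw [hm]; field_simp; ring
  rw [Int.floor_eq_iff, key]
  have hb0 : (0:ℚ) ≤ (((m % p : ℤ):ℚ) * p + r)/(p:ℚ)^2 := by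
    apply div_nonneg _ (by positivity)
    have : (0:ℚ) ≤ ((m % p : ℤ):ℚ) := by exact_mod_cast hmod0
    nlinarith [hp0.le, (show (0:ℚ) ≤ (r:ℚ) by exact_mod_cast h0)]
  have hb1 : (((m % p : ℤ):ℚ) * p + r)/(p:ℚ)^2 < 1 := by
    rw [div_lt_one (by positivity)]
    have h2 : ((m % p : ℤ):ℚ) ≤ (p:ℚ) - 1 := by
      have : m % p ≤ (p:ℤ) - 1 := by omega
      exact_mod_cast this
    have h3 : (r:ℚ) ≤ (p:ℚ) - 1 := by
      have : r ≤ (p:ℤ) - 1 := by omega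
      exact_mod_cast this
    nlinarith [hp0]
  constructor
  · linarith
  · push_cast; linarith


theorem S2_sub_S3 (p d j : ℕ) (hp : p.Prime) (hodd : Odd p) (hd : 0 < d) (hpd : ¬ p ∣ d)
    (hj1 : 1 ≤ j) (hj2 : 2 * j < p) :
    (∑ i ∈ Finset.Icc j (p - 1),
        ⌊((i : ℚ) * d) / p - (1 - 1 / (p : ℚ)) * ((j : ℚ) * d) / p⌋) -
      (∑ i ∈ Finset.Icc (p - j) (p - 1),
        ⌊((i : ℚ) * d) / p - (1 - 1 / (p : ℚ)) * (((p - j : ℕ) : ℚ) * d) / p⌋) =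
    (j : ℤ) + ((p : ℤ) - 1) * ((d : ℤ) - 1) / 2 - (j : ℤ) * d + ⌊((j : ℚ) * d) / p⌋ := by
  have hp1 : 1 ≤ p := hp.one_le
  have hjp : j < p := by omega
  have hpz : (p:ℤ) ≠ 0 := by exact_mod_cast hp.pos.ne'
  have hpq : (p:ℚ) ≠ 0 := by exact_mod_cast hp.pos.ne'
  set A : ℕ := j * d / p with hAdef
  set r : ℕ := j * d % p with hrdef
  have hA : p * A + r = j * d := Nat.div_add_mod _ _
  have hrlt : r < p := Nat.mod_lt _ hp.pos
  have hr1 : 1 ≤ r := by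
    rcases Nat.eq_zero_or_pos r with h | h
    · exfalso
      have : p ∣ j * d := Nat.dvd_of_mod_eq_zero h
      rcases (Nat.Prime.dvd_mul hp).mp this with h' | h'
      · exact absurd (Nat.le_of_dvd (by omega) h') (by omega)
      · exact hpd h'
    · exact h
  set A' : ℕ := (p - j) * d / p with hA'def
  set r' : ℕ := (p - j) * d % p with hr'def
  have hA' : p * A' + r' = (p - j) * d := Nat.div_add_mod _ _
  have hr'lt : r' < p := Nat.mod_lt _ hp.pos
  have hr'1 : 1 ≤ r' := by
    rcases Nat.eq_zero_or_pos r' with h | h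
    · exfalso
      have : p ∣ (p - j) * d := Nat.dvd_of_mod_eq_zero h
      rcases (Nat.Prime.dvd_mul hp).mp this with h' | h'
      · exact absurd (Nat.le_of_dvd (by omega) h') (by omega)
      · exact hpd h'
    · exact h
  -- key: A' = d - A - 1 (over ℤ)
  have hsum : (p - j) * d + j * d = p * d := by
    rw [← Nat.add_mul]; congr 1; omega
  have hZ : (p:ℤ) * A' + r' + (p * A + r) = p * d := by
    have h : p * A' + r' + (p * A + r) = p * d := by rw [hA', hA]; exact hsum
    exact_mod_cast h
  have h5 : (p:ℤ) * ((d:ℤ) - A - A') = (r:ℤ) + r' := by push_cast; linarith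
  have hp0 : (0:ℤ) < p := by exact_mod_cast hp.pos
  have ht : (d:ℤ) - A - A' = 1 := by
    rcases lt_trichotomy ((d:ℤ) - A - A') 1 with h | h | h
    · exfalso
      have h6 : (p:ℤ) * ((d:ℤ) - A - A') ≤ p * 0 :=
        mul_le_mul_of_nonneg_left (by omega) hp0.le
      have : (1:ℤ) ≤ (r:ℤ) + r' := by
        have : (1:ℤ) ≤ (r:ℤ) := by exact_mod_cast hr1
        have : (1:ℤ) ≤ (r':ℤ) := by exact_mod_cast hr'1
        omega
      omega
    · exact h
    · exfalso
      have h6 : (p:ℤ) * 2 ≤ (p:ℤ) * ((d:ℤ) - A - A') :=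
        mul_le_mul_of_nonneg_left (by omega) hp0.le
      have hh1 : (r:ℤ) < p := by exact_mod_cast hrlt
      have hh2 : (r':ℤ) < p := by exact_mod_cast hr'lt
      omega
  have hA'val : (A':ℤ) = (d:ℤ) - A - 1 := by omega
  -- rewrite S2 summands
  have hs2 : ∀ i ∈ Finset.Icc j (p-1),
      ⌊((i : ℚ) * d) / p - (1 - 1 / (p : ℚ)) * ((j : ℚ) * d) / p⌋
        = (((i:ℤ) - j) * d + A) / p := by
    intro i hi
    have hc : (j:ℚ) * d = p * A + r := by exact_mod_cast hA.symm
    have heq : ((i : ℚ) * d) / p - (1 - 1 / (p : ℚ)) * ((j : ℚ) * d) / p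
        = (((((i:ℤ) - j) * d + A : ℤ)):ℚ) / p + ((r:ℤ):ℚ) / (p:ℚ)^2 := by
      field_simp
      push_cast
      linear_combination hc
    rw [heq, floor_aux p hp.pos _ r (by exact_mod_cast Nat.zero_le r)
      (by exact_mod_cast hrlt)]
  have hs3 : ∀ i ∈ Finset.Icc (p - j) (p-1),
      ⌊((i : ℚ) * d) / p - (1 - 1 / (p : ℚ)) * (((p - j : ℕ) : ℚ) * d) / p⌋
        = (((i:ℤ) - ((p:ℤ) - j)) * d + A') / p := by
    intro i hi
    have hc : ((p - j : ℕ):ℚ) * d = p * A' + r' := by exact_mod_cast hA'.symm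
    have hcast : ((p - j : ℕ):ℚ) = (p:ℚ) - j := by
      push_cast [Nat.cast_sub hjp.le]; ring
    have heq : ((i : ℚ) * d) / p - (1 - 1 / (p : ℚ)) * (((p - j : ℕ) : ℚ) * d) / p
        = (((((i:ℤ) - ((p:ℤ) - j)) * d + A' : ℤ)):ℚ) / p + ((r':ℤ):ℚ) / (p:ℚ)^2 := by
      rw [hcast] at hc ⊢
      field_simp
      push_cast
      linear_combination hc
    rw [heq, floor_aux p hp.pos _ r' (by exact_mod_cast Nat.zero_le r')
      (by exact_mod_cast hr'lt)]
  rw [Finset.sum_congr rfl hs2, Finset.sum_congr rfl hs3]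
  -- floor on RHS
  have hfloor : ⌊((j:ℚ) * d) / p⌋ = (A:ℤ) := by
    have h1 : ((j:ℚ) * d) / p = (((j * d : ℕ):ℤ):ℚ) / ((p:ℕ):ℚ) := by push_cast; ring
    rw [h1, Rat.floor_intCast_div_natCast]
    have h2 : ((j * d : ℕ):ℤ) = (r:ℤ) + (p:ℤ) * A := by
      have h := hA; zify at h; push_cast; linarith
    rw [h2, Int.add_mul_ediv_left _ _ hpz,
      Int.ediv_eq_zero_of_lt (by exact_mod_cast Nat.zero_le r) (by exact_mod_cast hrlt)]
    ring
  rw [hfloor]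
  -- reindex sums
  have hIcc1 : Finset.Icc j (p-1) = Finset.Ico j p := by
    rw [← Finset.Ico_add_one_right_eq_Icc]; congr 1; omega
  have hIcc2 : Finset.Icc (p-j) (p-1) = Finset.Ico (p-j) p := by
    rw [← Finset.Ico_add_one_right_eq_Icc]; congr 1; omega
  rw [hIcc1, hIcc2, Finset.sum_Ico_eq_sum_range, Finset.sum_Ico_eq_sum_range]
  have hrange : p - (p - j) = j := by omega
  rw [hrange]
  have hF : ∀ i ∈ range (p - j),
      ((((j + i : ℕ):ℤ) - j) * d + A) / p = ((i:ℤ) * d + A) / p := by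
    intro i _; congr 1; push_cast; ring
  have hG : ∀ i ∈ range j,
      ((((p - j + i : ℕ):ℤ) - ((p:ℤ) - j)) * d + A') / p = ((i:ℤ) * d + A') / p := by
    intro i _; congr 1; push_cast [Nat.cast_sub hjp.le]; ring
  rw [Finset.sum_congr rfl hF, Finset.sum_congr rfl hG]
  -- split full sum
  have hsplit : ∑ k ∈ range p, ((k:ℤ) * d + A) / p
      = (∑ k ∈ range (p - j), ((k:ℤ) * d + A) / p)
        + ∑ k ∈ Finset.Ico (p - j) p, ((k:ℤ) * d + A) / p := by
    rw [range_eq_Ico, ← Finset.sum_Ico_consecutive _ (Nat.zero_le (p - j)) (by omega : p - j ≤ p),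
      ← range_eq_Ico]
  have htail : ∑ k ∈ Finset.Ico (p - j) p, ((k:ℤ) * d + A) / p
      = ∑ m ∈ range j, (((p - j + m : ℕ):ℤ) * d + A) / p := by
    rw [Finset.sum_Ico_eq_sum_range, show p - (p - j) = j from by omega]
  -- pair tail with S3
  have hpair : ∀ m ∈ range j,
      (((p - j + m : ℕ):ℤ) * d + A) / p + (((j - 1 - m : ℕ):ℤ) * d + A') / p
        = (d:ℤ) - 1 := by
    intro m hm
    simp only [mem_range] at hm
    have hc1 : ((p - j + m : ℕ):ℤ) = (p:ℤ) - j + m := by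
      push_cast [Nat.cast_sub hjp.le]; ring
    have hc2 : ((j - 1 - m : ℕ):ℤ) = (j:ℤ) - 1 - m := by omega
    have e1 : (((p - j + m : ℕ):ℤ) * d + A) / p
        = (-(((j:ℤ) - m) * d - A)) / p + d := by
      rw [hc1, show ((p:ℤ) - j + m) * d + A = (-(((j:ℤ) - m) * d - A)) + (p:ℤ) * d by ring,
        Int.add_mul_ediv_left _ _ hpz]
    have e2 : (((j - 1 - m : ℕ):ℤ) * d + A') / p
        = ((((j:ℤ) - m) * d - A) - 1) / p := by
      congr 1; rw [hc2, hA'val]; ring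
    rw [e1, e2]
    have h := ediv_neg_add (p:ℤ) hp0 (((j:ℤ) - m) * d - (A:ℤ))
    linarith
  have hts : (∑ m ∈ range j, (((p - j + m : ℕ):ℤ) * d + A) / p)
      + (∑ m ∈ range j, ((m:ℤ) * d + A') / p) = (j:ℤ) * ((d:ℤ) - 1) := by
    rw [← Finset.sum_range_reflect (fun m => ((m:ℤ) * d + A') / p) j,
      ← Finset.sum_add_distrib, Finset.sum_congr rfl hpair, Finset.sum_const, card_range,
      nsmul_eq_mul]
  have hfull := full_sum p d A hp hpd
  have h2div : ((p:ℤ) - 1) * ((d:ℤ) - 1) / 2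
      = (∑ k ∈ range p, ((k:ℤ) * d + A) / p) - A := by
    rw [show ((p:ℤ) - 1) * ((d:ℤ) - 1)
        = 2 * ((∑ k ∈ range p, ((k:ℤ) * d + A) / p) - A) by linarith,
      Int.mul_ediv_cancel_left _ two_ne_zero]
  rw [h2div]
  linarith [hsplit, htail, hts]
end

section
/- Let p be an odd prime, d a positive integer with p ∤ d, and j an integer with 1 ≤ j < p - j. Then Σ_{i=j}^{p-1-j} ⌊i·d/p⌋ = (d-1)(p-1-2j)/2 + ⌊j·d/p⌋. -/
lemma floor_pair (p d i : ℕ) (hp : p.Prime) (hpd : ¬ p ∣ d)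
    (h1 : 0 < i) (h2 : i < p) :
    ⌊((i:ℚ) * d) / p⌋ + ⌊(((p - i : ℕ):ℚ) * d) / p⌋ = (d : ℤ) - 1 := by
  have hp0 : (0:ℚ) < (p:ℚ) := by exact_mod_cast hp.pos
  have hnd : ¬ ((p:ℤ)) ∣ ((i:ℤ) * d) := by
    rw [show ((i:ℤ)*d) = ((i*d : ℕ) : ℤ) by push_cast; ring, Int.natCast_dvd_natCast]
    intro h
    rcases (Nat.Prime.dvd_mul hp).mp h with h | h
    · exact absurd (Nat.le_of_dvd h1 h) (not_le.mpr h2)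
    · exact hpd h
  have hxlt : ((⌊((i:ℚ) * d) / p⌋ : ℚ)) < ((i:ℚ) * d) / p := by
    rcases lt_or_eq_of_le (Int.floor_le (((i:ℚ) * d) / p)) with h | h
    · exact h
    · exfalso; apply hnd
      refine ⟨⌊((i:ℚ)*d)/p⌋, ?_⟩
      have : ((i:ℚ) * d) = (p:ℚ) * (⌊((i:ℚ) * d) / p⌋ : ℚ) := by
        field_simp at h ⊢
        linarith
      exact_mod_cast this
  have hx1 : ((i:ℚ) * d) / p < ⌊((i:ℚ) * d) / p⌋ + 1 := Int.lt_floor_add_one _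
  have hrw : (((p - i : ℕ):ℚ) * d) / p = (d:ℚ) - ((i:ℚ) * d) / p := by
    rw [Nat.cast_sub h2.le]
    field_simp
  rw [hrw]
  have hfl : ⌊(d:ℚ) - ((i:ℚ)*d)/p⌋ = (d:ℤ) - ⌊((i:ℚ)*d)/p⌋ - 1 := by
    rw [Int.floor_eq_iff]
    push_cast
    constructor <;> linarith
  rw [hfl]; ring

theorem S1_formula (p d j : ℕ) (hp : p.Prime) (hodd : Odd p) (hd : 0 < d) (hpd : ¬ p ∣ d)
    (hj1 : 1 ≤ j) (hj2 : 2 * j < p) :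
    (∑ i ∈ Finset.Icc j (p - 1 - j), ⌊((i : ℚ) * d) / p⌋) =
      ((d : ℤ) - 1) * ((p : ℤ) - 1 - 2 * j) / 2 + ⌊((j : ℚ) * d) / p⌋ := by
  have hp1 : 1 ≤ p := hp.one_le
  have hsplit : Finset.Icc j (p-1-j) = insert j (Finset.Icc (j+1) (p-1-j)) := by
    ext k; simp [Finset.mem_Icc]; omega
  have hnotmem : j ∉ Finset.Icc (j+1) (p-1-j) := by
    simp [Finset.mem_Icc]
  rw [hsplit, Finset.sum_insert hnotmem]
  set T := Finset.Icc (j+1) (p-1-j) with hT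
  set S' := ∑ i ∈ T, ⌊((i:ℚ)*d)/p⌋ with hS'
  have hbij : S' = ∑ i ∈ T, ⌊(((p - i:ℕ):ℚ)*d)/p⌋ := by
    rw [hS']
    apply Finset.sum_nbij' (i := fun a => p - a) (j := fun a => p - a)
    · intro a ha; simp [hT, Finset.mem_Icc] at ha ⊢; omega
    · intro a ha; simp [hT, Finset.mem_Icc] at ha ⊢; omega
    · intro a ha; simp [hT, Finset.mem_Icc] at ha; omega
    · intro a ha; simp [hT, Finset.mem_Icc] at ha; omega
    · intro a ha; simp [hT, Finset.mem_Icc] at ha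
      rw [Nat.sub_sub_self (by omega)]
  have h2S : S' + S' = (T.card : ℤ) * ((d:ℤ) - 1) := by
    nth_rewrite 2 [hbij]
    rw [hS', ← Finset.sum_add_distrib]
    rw [Finset.sum_congr rfl (fun i hi => by
      simp [hT, Finset.mem_Icc] at hi
      exact floor_pair p d i hp hpd (by omega) (by omega))]
    simp [mul_comm]
    ring
  have hcard : (T.card : ℤ) = (p:ℤ) - 1 - 2*j := by
    simp [hT, Nat.card_Icc]
    omega
  rw [hcard] at h2S
  set A := ((d:ℤ) - 1) * ((p:ℤ) - 1 - 2*(j:ℤ)) with hA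
  have h2S' : 2 * S' = A := by rw [hA]; linarith
  set F := ⌊((j:ℚ)*d)/p⌋
  omega
end
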